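/- Let 𝕂 = ℚ_{>0}, and let x, y ∈ 𝕂^n satisfy (u_i + x_i)(1/u_{i+1} + 1/x_{i+1}) = (u_i + y_i)(1/u_{i+1} + 1/y_{i+1}) for all i ∈ {1,…,n−1}, and y_1 y_2 ⋯ y_n · x_1 x_2 ⋯ x_n = (u_1 u_2 ⋯ u_n)^2. Then y = f_u(x). -/

import Mathlib

/- Setting: the semifield `K = ℚ_{>0}` of positive rationals, a fixed `u ∈ K^n`,
all `n`-tuples extended `n`-periodically to families indexed by `ℤ`. -/

/-- The semifield of positive rational numbers. -/
abbrev QPos : Type := {q : ℚ // 0 < q}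

/-- The nonempty sum `f 0 + f 1 + ⋯ + f r`. -/
def addSum (f : ℕ → QPos) : ℕ → QPos
  | 0 => f 0
  | r + 1 => addSum f r + f (r + 1)

/-- The element `t_{r,j} = Σ_{k=0}^{r} (∏_{i=1}^{k} x_{j+i}) · (∏_{i=k+1}^{r} u_{j+i})`. -/
def tpoly (u x : ℤ → QPos) (r : ℕ) (j : ℤ) : QPos :=
  addSum
    (fun k => (∏ i ∈ Finset.Icc 1 k, x (j + i)) * ∏ i ∈ Finset.Icc (k + 1) r, u (j + i)) r

open Fin.IntCast in
/-- The `n`-periodic extension of an `n`-tuple to a family indexed by `ℤ`. -/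
def extend {n : ℕ} [NeZero n] (v : Fin n → QPos) : ℤ → QPos := fun i => v (i : Fin n)

/-- The map `f_u : K^n → K^n`, sending `x` to the `n`-tuple `y` with
`y_i = u_i · (u_{i-1} t_{n-1,i-1}) / (x_{i+1} t_{n-1,i+1})`. -/
def fu {n : ℕ} [NeZero n] (u : Fin n → QPos) (x : Fin n → QPos) : Fin n → QPos :=
  fun i =>
    u i * (extend u ((i : ℤ) - 1) * tpoly (extend u) (extend x) (n - 1) ((i : ℤ) - 1)) /
      (extend x ((i : ℤ) + 1) * tpoly (extend u) (extend x) (n - 1) ((i : ℤ) + 1))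


/-! ### Auxiliary lemmas -/

namespace FUaux

open Fin.CommRing

@[simp] lemma coe_div (a b : QPos) : ((a/b : QPos) : ℚ) = (a:ℚ)/b := by
  rw [div_eq_mul_inv, div_eq_mul_inv]; rfl

def valHom : QPos →* ℚ := { toFun := Subtype.val, map_one' := rfl, map_mul' := fun _ _ => rfl }

lemma addSum_congr {f g : ℕ → QPos} (r : ℕ) (h : ∀ k, k ≤ r → f k = g k) :
    addSum f r = addSum g r := by
  induction r with
  | zero => exact h 0 le_rfl
  | succ m ih => simp only [addSum]; rw [ih (fun k hk => h k (hk.trans (Nat.le_succ m))), h _ le_rfl]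

lemma addSum_mul (f : ℕ → QPos) (c : QPos) (r : ℕ) :
    addSum (fun k => f k * c) r = addSum f r * c := by
  induction r with
  | zero => rfl
  | succ m ih => simp only [addSum, ih, add_mul]

lemma addSum_const_mul (f : ℕ → QPos) (c : QPos) (r : ℕ) :
    addSum (fun k => c * f k) r = c * addSum f r := by
  induction r with
  | zero => rfl
  | succ m ih => simp only [addSum, ih, mul_add]

lemma addSum_shift (f : ℕ → QPos) (r : ℕ) :
    addSum f (r + 1) = f 0 + addSum (fun k => f (k + 1)) r := by
  induction r with
  | zero => rfl
  | succ m ih => simp only [addSum] at *; rw [ih, add_assoc]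

lemma prodIcc (g : ℤ → QPos) (j : ℤ) (a m : ℕ) :
    ∏ i ∈ Finset.Icc a m, g (j + i) = ∏ i ∈ Finset.range (m + 1 - a), g (j + (a + i)) := by
  rw [← Finset.Ico_add_one_right_eq_Icc, Finset.prod_Ico_eq_prod_range]
  exact Finset.prod_congr rfl fun s _ => by push_cast; ring_nf

lemma recB (u x : ℤ → QPos) (r : ℕ) (j : ℤ) :
    tpoly u x (r + 1) j =
      tpoly u x r j * u (j + (r + 1 : ℕ)) + ∏ i ∈ Finset.Icc 1 (r + 1), x (j + i) := by
  show addSum _ r + _ = _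
  congr 1
  · rw [tpoly, ← addSum_mul]
    apply addSum_congr
    intro k hk
    rw [Finset.prod_Icc_succ_top (Nat.succ_le_succ hk), mul_assoc]
  · simp [Finset.Icc_eq_empty_of_lt (Nat.lt_succ_self (r+1))]

lemma recA (u x : ℤ → QPos) (r : ℕ) (j : ℤ) :
    tpoly u x (r + 1) j =
      (∏ i ∈ Finset.Icc 1 (r + 1), u (j + i)) + x (j + 1) * tpoly u x r (j + 1) := by
  unfold tpoly
  rw [addSum_shift]
  congr 1
  · simp
  · rw [← addSum_const_mul]
    apply addSum_congr
    intro k hk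
    rw [prodIcc x j 1 (k+1), prodIcc x (j+1) 1 k, prodIcc u j (k+1+1) (r+1), prodIcc u (j+1) (k+1) r]
    simp only [Nat.add_sub_cancel]
    have e3 : (r + 1 + 1 - (k + 1 + 1)) = r + 1 - (k+1) := by omega
    rw [e3, Finset.prod_range_succ']
    push_cast
    ring_nf
    rw [mul_assoc, mul_left_comm]

section
variable {n : ℕ} [NeZero n]

lemma intCast_coe (i : Fin n) : (((i : ℤ)) : Fin n) = i := by
  push_cast [Fin.cast_val_eq_self]; rfl

lemma extend_congr (v : Fin n → QPos) {i j : ℤ} (h : (i : Fin n) = (j : Fin n)) :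
    extend v i = extend v j := by simp [extend, h]

lemma tpoly_congr (u x : Fin n → QPos) {i j : ℤ} (r : ℕ) (h : (i : Fin n) = (j : Fin n)) :
    tpoly (extend u) (extend x) r i = tpoly (extend u) (extend x) r j := by
  unfold tpoly
  apply addSum_congr
  intro k _
  congr 1
  · exact Finset.prod_congr rfl fun s _ => extend_congr x (by push_cast [h]; ring)
  · exact Finset.prod_congr rfl fun s _ => extend_congr u (by push_cast [h]; ring)

lemma prod_period (v : Fin n → QPos) (j : ℤ) :
    extend v j * ∏ i ∈ Finset.Icc 1 (n-1), extend v (j + i) = ∏ ι, v ι := by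
  have hn : n - 1 + 1 = n := Nat.succ_pred_eq_of_pos (NeZero.pos n)
  rw [prodIcc]
  simp only [Nat.add_sub_cancel]
  have h1 : extend v j = (fun i : ℕ => extend v (j + i)) 0 := by norm_num
  rw [h1, mul_comm]
  have h2 : ∀ s : ℕ, extend v (j + (((1:ℕ):ℤ) + (s:ℤ))) = (fun i : ℕ => extend v (j + i)) (s + 1) := by
    intro s; simp only; congr 1; push_cast; ring
  rw [Finset.prod_congr rfl (fun s _ => h2 s), ← Finset.prod_range_succ' (fun i : ℕ => extend v (j + i)) (n-1), hn]
  have h3 : ∀ i : ℕ, extend v (j + i) = v ((j : Fin n) + (i : Fin n)) := by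
    intro i; simp only [extend]; congr 1; push_cast; ring
  rw [Finset.prod_congr rfl (fun s _ => h3 s)]
  rw [← Fin.prod_univ_eq_prod_range (fun i : ℕ => v ((j : Fin n) + (i : Fin n))) n]
  simp only [Fin.cast_val_eq_self]
  exact Equiv.prod_comp (Equiv.addLeft ((j : Fin n))) v

lemma extend_fu (u x : Fin n → QPos) (i : ℤ) :
    extend (fu u x) i = extend u i *
        (extend u (i-1) * tpoly (extend u) (extend x) (n-1) (i-1)) /
        (extend x (i+1) * tpoly (extend u) (extend x) (n-1) (i+1)) := by
  have key : ∀ d : ℤ, ((((i : Fin n) : ℤ) + d : ℤ) : Fin n) = ((i + d : ℤ) : Fin n) := by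
    intro d; push_cast [intCast_coe, Fin.cast_val_eq_self]; ring
  have keym : ((((i : Fin n) : ℤ) - 1 : ℤ) : Fin n) = ((i - 1 : ℤ) : Fin n) := by
    have := key (-1); simpa [sub_eq_add_neg] using this
  have e1 : extend u (((i : Fin n) : ℤ) - 1) = extend u (i-1) := extend_congr u keym
  have e2 : tpoly (extend u) (extend x) (n-1) (((i : Fin n) : ℤ) - 1)
      = tpoly (extend u) (extend x) (n-1) (i-1) := tpoly_congr u x _ keym
  have e3 : extend x (((i : Fin n) : ℤ) + 1) = extend x (i+1) := extend_congr x (key 1)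
  have e4 : tpoly (extend u) (extend x) (n-1) (((i : Fin n) : ℤ) + 1)
      = tpoly (extend u) (extend x) (n-1) (i+1) := tpoly_congr u x _ (key 1)
  show u ((i : Fin n)) * (extend u (((i : Fin n) : ℤ) - 1) *
      tpoly (extend u) (extend x) (n-1) (((i : Fin n) : ℤ) - 1)) /
      (extend x (((i : Fin n) : ℤ) + 1) *
      tpoly (extend u) (extend x) (n-1) (((i : Fin n) : ℤ) + 1)) = _
  rw [e1, e2, e3, e4]
  rfl

lemma fu_prod (u x : Fin n → QPos) :
    (∏ ι, fu u x ι) * ∏ ι, x ι = (∏ ι, u ι) ^ 2 := by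
  set T : Fin n → QPos := fun κ => tpoly (extend u) (extend x) (n-1) ((κ : ℤ)) with hT
  have hform : ∀ ι : Fin n, fu u x ι = u ι * (u (ι-1) * T (ι-1)) / (x (ι+1) * T (ι+1)) := by
    intro ι
    have k1 : (((ι : ℤ) - 1 : ℤ) : Fin n) = ((((ι - 1 : Fin n) : ℤ)) : Fin n) := by
      push_cast [intCast_coe, Fin.cast_val_eq_self]; ring
    have k2 : (((ι : ℤ) + 1 : ℤ) : Fin n) = ((((ι + 1 : Fin n) : ℤ)) : Fin n) := by
      push_cast [intCast_coe, Fin.cast_val_eq_self]; ring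
    have e1 : extend u ((ι : ℤ) - 1) = u (ι - 1) := by
      rw [extend_congr u k1]; show u _ = _; rw [intCast_coe]
    have e2 : tpoly (extend u) (extend x) (n-1) ((ι : ℤ) - 1) = T (ι - 1) :=
      tpoly_congr u x _ k1
    have e3 : extend x ((ι : ℤ) + 1) = x (ι + 1) := by
      rw [extend_congr x k2]; show x _ = _; rw [intCast_coe]
    have e4 : tpoly (extend u) (extend x) (n-1) ((ι : ℤ) + 1) = T (ι + 1) :=
      tpoly_congr u x _ k2
    show u ι * (extend u ((ι : ℤ) - 1) * tpoly (extend u) (extend x) (n-1) ((ι : ℤ) - 1)) /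
        (extend x ((ι : ℤ) + 1) * tpoly (extend u) (extend x) (n-1) ((ι : ℤ) + 1)) = _
    rw [e1, e2, e3, e4]
  rw [Finset.prod_congr rfl (fun ι _ => hform ι)]
  rw [Finset.prod_div_distrib, Finset.prod_mul_distrib, Finset.prod_mul_distrib, Finset.prod_mul_distrib]
  have e1 : ∏ ι : Fin n, u (ι-1) = ∏ ι, u ι := Equiv.prod_comp (Equiv.subRight (1 : Fin n)) u
  have e2 : ∏ ι : Fin n, T (ι-1) = ∏ ι, T ι := Equiv.prod_comp (Equiv.subRight (1 : Fin n)) T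
  have e3 : ∏ ι : Fin n, x (ι+1) = ∏ ι, x ι := Equiv.prod_comp (Equiv.addRight (1 : Fin n)) x
  have e4 : ∏ ι : Fin n, T (ι+1) = ∏ ι, T ι := Equiv.prod_comp (Equiv.addRight (1 : Fin n)) T
  rw [e1, e2, e3, e4, div_mul_eq_mul_div, div_eq_iff_eq_mul, pow_two]
  ac_rfl

end

section
variable {m : ℕ}

lemma star1 (u x : Fin (m+2) → QPos) (j : ℤ) :
    extend x (j+1) * tpoly (extend u) (extend x) (m+1) (j+1) + ∏ ι, u ι
      = (∏ ι, x ι) + extend u j * tpoly (extend u) (extend x) (m+1) j := by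
  have hA := congrArg Subtype.val (recA (extend u) (extend x) m j)
  have hB0 := recB (extend u) (extend x) m (j+1)
  have hper : extend u (j + 1 + ((m+1 : ℕ) : ℤ)) = extend u j := extend_congr u (by
    have h0 : ((m+2 : ℕ) : Fin (m+2)) = 0 := Fin.natCast_self _
    push_cast at h0 ⊢
    linear_combination h0)
  rw [hper] at hB0
  have hB := congrArg Subtype.val hB0
  have hU := congrArg Subtype.val (prod_period u j)
  have hX := congrArg Subtype.val (prod_period x (j+1))
  norm_num at hU hX
  apply Subtype.ext
  simp only [Positive.coe_add, Positive.val_mul] at hA hB hU hX ⊢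
  linear_combination (extend x (j+1) : ℚ) * hB - (extend u j : ℚ) * hA - hU + hX

lemma star2 (u x : Fin (m+2) → QPos) (j : ℤ) :
    extend u (j-1) * tpoly (extend u) (extend x) (m+1) (j-1) + ∏ ι, x ι
      = (∏ ι, u ι) + extend x j * tpoly (extend u) (extend x) (m+1) j := by
  have hA0 := recA (extend u) (extend x) m (j-1)
  have e : j - 1 + 1 = j := by ring
  rw [e] at hA0
  have hA := congrArg Subtype.val hA0
  have hB0 := recB (extend u) (extend x) m j
  have hper : extend u (j + ((m+1 : ℕ) : ℤ)) = extend u (j-1) := extend_congr u (by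
    have h0 : ((m+2 : ℕ) : Fin (m+2)) = 0 := Fin.natCast_self _
    push_cast at h0 ⊢
    linear_combination h0)
  rw [hper] at hB0
  have hB := congrArg Subtype.val hB0
  have hU := congrArg Subtype.val (prod_period u (j-1))
  have hX := congrArg Subtype.val (prod_period x j)
  norm_num at hU hX
  apply Subtype.ext
  simp only [Positive.coe_add, Positive.val_mul] at hA hB hU hX ⊢
  linear_combination (extend u (j-1) : ℚ) * hA - (extend x j : ℚ) * hB + hU - hX

lemma diamond (u x : Fin (m+2) → QPos) (j : ℤ) :
    (extend x (j+1) : ℚ) * (tpoly (extend u) (extend x) (m+1) (j+1) : ℚ)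
      + (extend u (j-1) : ℚ) * (tpoly (extend u) (extend x) (m+1) (j-1) : ℚ)
      = ((extend u j : ℚ) + (extend x j : ℚ)) * (tpoly (extend u) (extend x) (m+1) j : ℚ) := by
  have h1 := congrArg Subtype.val (star1 u x j)
  have h2 := congrArg Subtype.val (star2 u x j)
  simp only [Positive.coe_add, Positive.val_mul] at h1 h2
  linear_combination h1 + h2

lemma fu_h1 (u x : Fin (m+2) → QPos) (j : ℤ) :
    (extend u j + extend x j) * ((extend u (j+1))⁻¹ + (extend x (j+1))⁻¹)
      = (extend u j + extend (fu u x) j) * ((extend u (j+1))⁻¹ + (extend (fu u x) (j+1))⁻¹) := by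
  rw [extend_fu u x j, extend_fu u x (j+1)]
  simp only [show m+2-1 = m+1 from rfl]
  have d1 := diamond u x j
  have d2 := diamond u x (j+1)
  rw [show (j:ℤ)+1-1 = j from by ring] at d2 ⊢
  apply Subtype.ext
  simp only [Positive.coe_add, Positive.val_mul, coe_div, Positive.coe_inv]
  set a := (extend u j : ℚ) with h_a
  set b := (extend u (j+1) : ℚ)
  set c := (extend u (j-1) : ℚ)
  set p := (extend x j : ℚ)
  set q := (extend x (j+1) : ℚ)
  set r := (extend x (j+1+1) : ℚ)
  set S := (tpoly (extend u) (extend x) (m+1) (j-1) : ℚ)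
  set T := (tpoly (extend u) (extend x) (m+1) j : ℚ)
  set V := (tpoly (extend u) (extend x) (m+1) (j+1) : ℚ)
  set W := (tpoly (extend u) (extend x) (m+1) (j+1+1) : ℚ)
  have ha : 0 < a := (extend u j).2
  have hb : 0 < b := (extend u (j+1)).2
  have hp : 0 < p := (extend x j).2
  have hq : 0 < q := (extend x (j+1)).2
  have hr : 0 < r := (extend x (j+1+1)).2
  have hS : 0 < S := (tpoly (extend u) (extend x) (m+1) (j-1)).2
  have hT : 0 < T := (tpoly (extend u) (extend x) (m+1) j).2
  have hV : 0 < V := (tpoly (extend u) (extend x) (m+1) (j+1)).2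
  have hW : 0 < W := (tpoly (extend u) (extend x) (m+1) (j+1+1)).2
  have hd1 : q*V + c*S = (a+p)*T := d1
  have hd2 : r*W + a*T = (b+q)*V := d2
  have h1 : (q*V : ℚ) ≠ 0 := by positivity
  have h2 : (r*W : ℚ) ≠ 0 := by positivity
  have h3 : (b:ℚ) ≠ 0 := ne_of_gt hb
  have h4 : (q:ℚ) ≠ 0 := ne_of_gt hq
  have h5 : (a*T : ℚ) ≠ 0 := by positivity
  field_simp
  linear_combination (-1)*(r*W+a*T) * hd1 + (-1)*(a+p)*T * hd2

end

lemma step_lt {u b a a' c c' : ℚ} (hu:0<u) (hb:0<b) (ha:0<a) (ha':0<a') (hc:0<c) (hc':0<c')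
    (h : (u+a)*(b⁻¹+c⁻¹) = (u+a')*(b⁻¹+c'⁻¹)) (hlt : a < a') : c < c' := by
  have hbne : b ≠ 0 := ne_of_gt hb
  have hcne : c ≠ 0 := ne_of_gt hc
  have hc'ne : c' ≠ 0 := ne_of_gt hc'
  field_simp at h
  by_contra hle
  push_neg at hle
  nlinarith [mul_pos hb (mul_pos (sub_pos.2 hlt) (mul_pos hc hc')),
    mul_pos (mul_pos hb hb) (mul_pos (sub_pos.2 hlt) hc),
    mul_nonneg (le_of_lt (mul_pos (mul_pos hb hb) (by linarith : (0:ℚ) < u + a))) (by linarith : (0:ℚ) ≤ c - c')]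

lemma step_eq {u b a c c' : ℚ} (hu:0<u) (ha:0<a) (hc:0<c) (hc':0<c')
    (h : (u+a)*(b⁻¹+c⁻¹) = (u+a)*(b⁻¹+c'⁻¹)) : c = c' := by
  have h2 := mul_left_cancel₀ (by positivity : (u+a) ≠ 0) h
  have h3 := add_left_cancel h2
  exact inv_injective h3

section
variable {n : ℕ} [NeZero n]

lemma mono_chain (u : Fin n → QPos) (Ya Yb : Fin n → QPos)
    (hrel : ∀ i : ℤ, 0 ≤ i → i + 1 < (n:ℤ) →
      (extend u i + extend Ya i) * ((extend u (i + 1))⁻¹ + (extend Ya (i + 1))⁻¹) =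
        (extend u i + extend Yb i) * ((extend u (i + 1))⁻¹ + (extend Yb (i + 1))⁻¹))
    (h0 : (extend Ya 0 : ℚ) < extend Yb 0) :
    ∀ k : ℕ, (k:ℤ) < n → (extend Ya (k:ℤ) : ℚ) < extend Yb (k:ℤ) := by
  intro k
  induction k with
  | zero => intro _; simpa using h0
  | succ s ih =>
    intro hk
    have hs : (s:ℤ) + 1 < (n:ℤ) := by push_cast at hk ⊢; omega
    have hprev : (extend Ya (s:ℤ) : ℚ) < extend Yb (s:ℤ) := ih (by omega)
    have h := congrArg Subtype.val (hrel s (by positivity) hs)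
    simp only [Positive.coe_add, Positive.val_mul, Positive.coe_inv] at h
    have := step_lt (extend u (s:ℤ)).2 (extend u ((s:ℤ)+1)).2 (extend Ya (s:ℤ)).2
      (extend Yb (s:ℤ)).2 (extend Ya ((s:ℤ)+1)).2 (extend Yb ((s:ℤ)+1)).2 h hprev
    push_cast
    exact this

lemma eq_chain (u : Fin n → QPos) (Ya Yb : Fin n → QPos)
    (hrel : ∀ i : ℤ, 0 ≤ i → i + 1 < (n:ℤ) →
      (extend u i + extend Ya i) * ((extend u (i + 1))⁻¹ + (extend Ya (i + 1))⁻¹) =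
        (extend u i + extend Yb i) * ((extend u (i + 1))⁻¹ + (extend Yb (i + 1))⁻¹))
    (h0 : extend Ya 0 = extend Yb 0) :
    ∀ k : ℕ, (k:ℤ) < n → extend Ya (k:ℤ) = extend Yb (k:ℤ) := by
  intro k
  induction k with
  | zero => intro _; simpa using h0
  | succ s ih =>
    intro hk
    have hs : (s:ℤ) + 1 < (n:ℤ) := by push_cast at hk ⊢; omega
    have hprev := ih (by omega)
    have h := congrArg Subtype.val (hrel s (by positivity) hs)
    rw [hprev] at h
    simp only [Positive.coe_add, Positive.val_mul, Positive.coe_inv] at h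
    have := step_eq (extend u (s:ℤ)).2 (extend Yb (s:ℤ)).2 (extend Ya ((s:ℤ)+1)).2
      (extend Yb ((s:ℤ)+1)).2 h
    push_cast
    exact Subtype.ext this

lemma prod_lt_of_chain (Ya Yb : Fin n → QPos)
    (hall : ∀ k : ℕ, (k:ℤ) < n → (extend Ya (k:ℤ) : ℚ) < extend Yb (k:ℤ)) :
    (∏ ι, Ya ι) < ∏ ι, Yb ι := by
  rw [← Subtype.coe_lt_coe]
  have e : ∀ (v : Fin n → QPos), ((∏ ι, v ι : QPos) : ℚ) = ∏ ι, (v ι : ℚ) := fun v =>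
    map_prod valHom v Finset.univ
  rw [e, e]
  apply Finset.prod_lt_prod_of_nonempty (fun ι _ => (Ya ι).2) _ Finset.univ_nonempty
  intro ι _
  have := hall ι.val (by exact_mod_cast ι.isLt)
  simpa [extend, Fin.cast_val_eq_self] using this

end

end FUaux

open FUaux in
/-- Proposition: over `K = ℚ_{>0}`, if `x, y ∈ K^n` satisfy
`(u_i + x_i)(1/u_{i+1} + 1/x_{i+1}) = (u_i + y_i)(1/u_{i+1} + 1/y_{i+1})` for all
`i ∈ {1,…,n−1}` (here indexed by `0 ≤ i`, `i+1 < n`), and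
`y_1 ⋯ y_n · x_1 ⋯ x_n = (u_1 ⋯ u_n)^2`, then `y = f_u(x)`. -/
theorem fu_unique_posrat (n : ℕ) [NeZero n] (u x y : Fin n → QPos)
    (h1 : ∀ i : ℤ, 0 ≤ i → i + 1 < n →
      (extend u i + extend x i) * ((extend u (i + 1))⁻¹ + (extend x (i + 1))⁻¹) =
        (extend u i + extend y i) * ((extend u (i + 1))⁻¹ + (extend y (i + 1))⁻¹))
    (h2 : (∏ i, y i) * ∏ i, x i = (∏ i, u i) ^ 2) :
    y = fu u x := by
  classical
  have hrel : ∀ i : ℤ, 0 ≤ i → i + 1 < (n:ℤ) →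
      (extend u i + extend y i) * ((extend u (i + 1))⁻¹ + (extend y (i + 1))⁻¹) =
        (extend u i + extend (fu u x) i) * ((extend u (i + 1))⁻¹ + (extend (fu u x) (i + 1))⁻¹) := by
    intro i h0 hn'
    rw [← h1 i h0 hn']
    obtain ⟨m, rfl⟩ : ∃ m, n = m + 2 := ⟨n - 2, by omega⟩
    exact fu_h1 u x i
  have hprod : ∏ ι, y ι = ∏ ι, fu u x ι :=
    mul_right_cancel (h2.trans (fu_prod u x).symm)
  have hrel' : ∀ i : ℤ, 0 ≤ i → i + 1 < (n:ℤ) →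
      (extend u i + extend (fu u x) i) * ((extend u (i + 1))⁻¹ + (extend (fu u x) (i + 1))⁻¹) =
        (extend u i + extend y i) * ((extend u (i + 1))⁻¹ + (extend y (i + 1))⁻¹) :=
    fun i a b => (hrel i a b).symm
  have h00 : extend y 0 = extend (fu u x) 0 := by
    rcases lt_trichotomy ((extend y 0 : ℚ)) ((extend (fu u x) 0 : ℚ)) with hlt | heq | hgt
    · exact absurd hprod (ne_of_lt (prod_lt_of_chain y (fu u x) (mono_chain u y (fu u x) hrel hlt)))
    · exact Subtype.ext heq
    · exact absurd hprod.symm (ne_of_lt (prod_lt_of_chain (fu u x) y (mono_chain u (fu u x) y hrel' hgt)))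
  have hk := eq_chain u y (fu u x) hrel h00
  funext ι
  have := hk ι.val (by exact_mod_cast ι.isLt)
  simpa [extend, Fin.cast_val_eq_self, intCast_coe] using this
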